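/- Let A ∈ ℝ^{n×n}, B^m ∈ ℝ^{n×m}, B^p ∈ ℝ^{n×r} with rank(B^p) = r, C ∈ ℝ^{p×n}, and let U ∈ ℝ^{m×N}, W ∈ ℝ^{r×N}, X ∈ ℝ^{n×N} be data matrices such that [U; W; X] has full row rank m + r + n. Define Ẋ := A X + B^m U + B^p W, Y := C X, Ẏ := C Ẋ. Suppose that for every s ∈ ℂ with Re(s) ≥ 0 the rank over ℂ of [s X − Ẋ; U; Y] equals n + m + r. Then for EVERY triple of matrices T_u ∈ ℝ^{n×m}, T_y ∈ ℝ^{n×p}, T_x ∈ ℝ^{n×n} satisfying Ẋ = T_u U + T_y Ẏ + T_x X and rank(T_y) = r, the pair (T_x, C) is detectable. -/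

import Mathlib

open Matrix
open Module

lemma aux_mapC_mul {a b c : Type*} [Fintype b] (P : Matrix a b ℝ) (Q : Matrix b c ℝ) :
    (P * Q).map Complex.ofReal = P.map Complex.ofReal * Q.map Complex.ofReal := by
  ext i j
  simp [Matrix.map_apply, Matrix.mul_apply]

lemma aux_mapC_sub {a b : Type*} (P Q : Matrix a b ℝ) :
    (P - Q).map Complex.ofReal = P.map Complex.ofReal - Q.map Complex.ofReal := by
  ext i j
  simp [Matrix.map_apply]

lemma aux_mulVec_eq_zero {K : Type*} [Field K] {c d : Type*} [Fintype c] [Fintype d]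
    {M : Matrix c d K} (h : M.rank = Fintype.card d) {v : d → K} (hv : M *ᵥ v = 0) : v = 0 := by
  have hk := LinearMap.finrank_range_add_finrank_ker M.mulVecLin
  rw [Module.finrank_pi] at hk
  have h' : finrank K (LinearMap.range M.mulVecLin) = Fintype.card d := h
  have hker : finrank K (LinearMap.ker M.mulVecLin) = 0 := by omega
  have hbot : LinearMap.ker M.mulVecLin = ⊥ := Submodule.finrank_eq_zero.mp hker
  have hv' : v ∈ LinearMap.ker M.mulVecLin := by
    simpa [LinearMap.mem_ker, Matrix.mulVecLin_apply] using hv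
  rw [hbot] at hv'
  simpa using hv'

lemma aux_rank_of_inj {K : Type*} [Field K] {c d : Type*} [Fintype c] [Fintype d]
    {M : Matrix c d K} (h : ∀ v : d → K, M *ᵥ v = 0 → v = 0) :
    M.rank = Fintype.card d := by
  have hk := LinearMap.finrank_range_add_finrank_ker M.mulVecLin
  rw [Module.finrank_pi] at hk
  have hbot : LinearMap.ker M.mulVecLin = ⊥ := by
    rw [LinearMap.ker_eq_bot']
    intro v hv
    exact h v (by simpa [Matrix.mulVecLin_apply] using hv)
  rw [hbot, finrank_bot, add_zero] at hk
  exact hk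

lemma aux_exists_right_inv {c d : Type*} [Fintype c] [Fintype d] [DecidableEq c]
    {M : Matrix c d ℝ} (h : M.rank = Fintype.card c) :
    ∃ G : Matrix d c ℝ, M * G = 1 := by
  have h' : finrank ℝ (LinearMap.range M.mulVecLin) = Fintype.card c := h
  have htop : LinearMap.range M.mulVecLin = ⊤ :=
    Submodule.eq_top_of_finrank_eq (by rw [h', Module.finrank_pi])
  have hs : Function.Surjective M.mulVecLin := LinearMap.range_eq_top.mp htop
  choose g hg using fun i => hs (Pi.single i 1)
  refine ⟨Matrix.of fun j i => g i j, ?_⟩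
  ext k i
  have := congrFun (hg i) k
  simpa [Matrix.mul_apply, Matrix.mulVecLin_apply, Matrix.mulVec, dotProduct,
    Matrix.one_apply, Pi.single_apply, eq_comm] using this


/-- PBH detectability of a pair `(M, C)` of real matrices. -/
def Detectable {n p : ℕ} (M : Matrix (Fin n) (Fin n) ℝ)
    (C : Matrix (Fin p) (Fin n) ℝ) : Prop :=
  ∀ s : ℂ, 0 ≤ s.re →
    (Matrix.fromRows (s • (1 : Matrix (Fin n) (Fin n) ℂ) - M.map Complex.ofReal)
      (C.map Complex.ofReal)).rank = n

/-- Under the data-driven detectability condition, every solution `(T_u, T_y, T_x)` of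
`Ẋ = T_u U + T_y Ẏ + T_x X` with `rank T_y = r` yields a detectable pair `(T_x, C)`. -/
theorem stmt15 {n m r pdim N : ℕ}
    (A : Matrix (Fin n) (Fin n) ℝ)
    (Bm : Matrix (Fin n) (Fin m) ℝ) (Bp : Matrix (Fin n) (Fin r) ℝ)
    (hBp : Bp.rank = r)
    (C : Matrix (Fin pdim) (Fin n) ℝ)
    (U : Matrix (Fin m) (Fin N) ℝ) (W : Matrix (Fin r) (Fin N) ℝ)
    (X : Matrix (Fin n) (Fin N) ℝ)
    (hrank : (Matrix.fromRows U (Matrix.fromRows W X)).rank = m + r + n)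
    (Xdot : Matrix (Fin n) (Fin N) ℝ) (hXdot : Xdot = A * X + Bm * U + Bp * W)
    (Y : Matrix (Fin pdim) (Fin N) ℝ) (hY : Y = C * X)
    (Ydot : Matrix (Fin pdim) (Fin N) ℝ) (hYdot : Ydot = C * Xdot)
    (hdet : ∀ s : ℂ, 0 ≤ s.re →
      (Matrix.fromRows (s • X.map Complex.ofReal - Xdot.map Complex.ofReal)
        (Matrix.fromRows (U.map Complex.ofReal) (Y.map Complex.ofReal))).rank =
        n + m + r) :
    ∀ (Tu : Matrix (Fin n) (Fin m) ℝ) (Ty : Matrix (Fin n) (Fin pdim) ℝ)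
      (Tx : Matrix (Fin n) (Fin n) ℝ),
      Xdot = Tu * U + Ty * Ydot + Tx * X → Ty.rank = r →
        Detectable Tx C := by
  intro Tu Ty Tx hT hTy
  have hcard : Fintype.card (Fin m ⊕ (Fin r ⊕ Fin n)) = m + r + n := by
    simp [add_assoc]
  -- right inverse of the data matrix
  obtain ⟨G, hG⟩ := aux_exists_right_inv
    (M := Matrix.fromRows U (Matrix.fromRows W X)) (by rw [hcard]; exact hrank)
  -- coefficient identities
  have hP : (Matrix.fromCols (Bm - Ty * (C * Bm) - Tu)
      (Matrix.fromCols (Bp - Ty * (C * Bp)) (A - Ty * (C * A) - Tx))) *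
      Matrix.fromRows U (Matrix.fromRows W X) = 0 := by
    rw [Matrix.fromCols_mul_fromRows, Matrix.fromCols_mul_fromRows]
    have key : (Bm - Ty * (C * Bm) - Tu) * U +
        ((Bp - Ty * (C * Bp)) * W + (A - Ty * (C * A) - Tx) * X)
        = Xdot - (Tu * U + Ty * Ydot + Tx * X) := by
      rw [hYdot, hXdot]
      simp only [Matrix.sub_mul, Matrix.mul_add, Matrix.mul_assoc]
      abel
    rw [key, ← hT, sub_self]
  have hPz : Matrix.fromCols (Bm - Ty * (C * Bm) - Tu)
      (Matrix.fromCols (Bp - Ty * (C * Bp)) (A - Ty * (C * A) - Tx)) = 0 := by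
    have h2 := congrArg (· * G) hP
    simpa [Matrix.mul_assoc, hG] using h2
  have hBp2 : Ty * (C * Bp) = Bp := by
    have h2 : Bp - Ty * (C * Bp) = 0 := by
      ext i j
      have := congrFun (congrFun hPz i) (Sum.inr (Sum.inl j))
      simpa using this
    have := sub_eq_zero.mp h2
    exact this.symm
  have hTxEq : Tx = A - Ty * (C * A) := by
    have h3 : A - Ty * (C * A) - Tx = 0 := by
      ext i j
      have := congrFun (congrFun hPz i) (Sum.inr (Sum.inr j))
      simpa using this
    exact (sub_eq_zero.mp h3).symm
  -- a real matrix S with Bp * S = Ty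
  have hle : LinearMap.range Bp.mulVecLin ≤ LinearMap.range Ty.mulVecLin := by
    rw [← hBp2, Matrix.mulVecLin_mul]
    exact LinearMap.range_comp_le_range _ _
  have hfr : finrank ℝ (LinearMap.range Ty.mulVecLin) ≤
      finrank ℝ (LinearMap.range Bp.mulVecLin) := by
    have e1 : finrank ℝ (LinearMap.range Ty.mulVecLin) = r := hTy
    have e2 : finrank ℝ (LinearMap.range Bp.mulVecLin) = r := hBp
    omega
  have heq : LinearMap.range Bp.mulVecLin = LinearMap.range Ty.mulVecLin :=
    Submodule.eq_of_le_of_finrank_le hle hfr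
  have hcol : ∀ j, ∃ u : Fin r → ℝ, Bp *ᵥ u = fun i => Ty i j := by
    intro j
    have hmem : (fun i => Ty i j) ∈ LinearMap.range Ty.mulVecLin :=
      ⟨Pi.single j 1, by simp [Matrix.mulVecLin_apply]; rfl⟩
    rw [← heq] at hmem
    obtain ⟨u, hu⟩ := hmem
    exact ⟨u, hu⟩
  choose sv hsv using hcol
  set S : Matrix (Fin r) (Fin pdim) ℝ := Matrix.of fun k j => sv j k with hSdef
  have hS : Bp * S = Ty := by
    ext i j
    have := congrFun (hsv j) i
    simpa [Matrix.mul_apply, Matrix.mulVec, dotProduct, hSdef] using this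
  -- now prove detectability
  intro s hs
  set K1 : Matrix (Fin n) (Fin m ⊕ (Fin r ⊕ Fin n)) ℂ :=
    Matrix.fromCols (-(Bm.map Complex.ofReal)) (Matrix.fromCols (-(Bp.map Complex.ofReal))
      (s • (1 : Matrix (Fin n) (Fin n) ℂ) - A.map Complex.ofReal)) with hK1
  set K2 : Matrix (Fin m) (Fin m ⊕ (Fin r ⊕ Fin n)) ℂ :=
    Matrix.fromCols (1 : Matrix (Fin m) (Fin m) ℂ)
      (0 : Matrix (Fin m) (Fin r ⊕ Fin n) ℂ) with hK2
  set K3 : Matrix (Fin pdim) (Fin m ⊕ (Fin r ⊕ Fin n)) ℂ :=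
    Matrix.fromCols (0 : Matrix (Fin pdim) (Fin m) ℂ)
      (Matrix.fromCols (0 : Matrix (Fin pdim) (Fin r) ℂ) (C.map Complex.ofReal)) with hK3
  set Kb : Matrix ((Fin n) ⊕ ((Fin m) ⊕ (Fin pdim))) (Fin m ⊕ (Fin r ⊕ Fin n)) ℂ :=
    Matrix.fromRows K1 (Matrix.fromRows K2 K3) with hKb
  have hXdc : Xdot.map Complex.ofReal =
      A.map Complex.ofReal * X.map Complex.ofReal +
      Bm.map Complex.ofReal * U.map Complex.ofReal +
      Bp.map Complex.ofReal * W.map Complex.ofReal := by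
    rw [hXdot]
    ext i j
    simp [Matrix.map_apply, Matrix.mul_apply, Matrix.add_apply]
  have hb1 : -(Bm.map Complex.ofReal) * U.map Complex.ofReal +
      (-(Bp.map Complex.ofReal) * W.map Complex.ofReal +
        (s • (1 : Matrix (Fin n) (Fin n) ℂ) - A.map Complex.ofReal) * X.map Complex.ofReal) =
      s • X.map Complex.ofReal - Xdot.map Complex.ofReal := by
    rw [hXdc]
    simp only [Matrix.sub_mul, Matrix.smul_mul, Matrix.one_mul, Matrix.neg_mul]
    abel
  have hb2 : (1 : Matrix (Fin m) (Fin m) ℂ) * U.map Complex.ofReal +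
      (0 : Matrix (Fin m) (Fin r ⊕ Fin n) ℂ) *
        Matrix.fromRows (W.map Complex.ofReal) (X.map Complex.ofReal) = U.map Complex.ofReal := by
    simp
  have hb3 : (0 : Matrix (Fin pdim) (Fin m) ℂ) * U.map Complex.ofReal +
      ((0 : Matrix (Fin pdim) (Fin r) ℂ) * W.map Complex.ofReal +
        C.map Complex.ofReal * X.map Complex.ofReal) = Y.map Complex.ofReal := by
    rw [hY, aux_mapC_mul]
    simp
  have hprod : Kb * Matrix.fromRows (U.map Complex.ofReal)
      (Matrix.fromRows (W.map Complex.ofReal) (X.map Complex.ofReal)) =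
      Matrix.fromRows (s • X.map Complex.ofReal - Xdot.map Complex.ofReal)
        (Matrix.fromRows (U.map Complex.ofReal) (Y.map Complex.ofReal)) := by
    rw [hKb, Matrix.fromRows_mul, Matrix.fromRows_mul, hK1, hK2, hK3,
      Matrix.fromCols_mul_fromRows, Matrix.fromCols_mul_fromRows,
      Matrix.fromCols_mul_fromRows, Matrix.fromCols_mul_fromRows,
      Matrix.fromCols_mul_fromRows, hb1, hb2, hb3]
  have hrankK : Kb.rank = Fintype.card (Fin m ⊕ (Fin r ⊕ Fin n)) := by
    have h1 := Matrix.rank_mul_le_left Kb (Matrix.fromRows (U.map Complex.ofReal)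
      (Matrix.fromRows (W.map Complex.ofReal) (X.map Complex.ofReal)))
    rw [hprod, hdet s hs] at h1
    have h2 := Kb.rank_le_card_width
    omega
  -- kernel argument
  have hinj : ∀ v : Fin n → ℂ,
      (Matrix.fromRows (s • (1 : Matrix (Fin n) (Fin n) ℂ) - Tx.map Complex.ofReal)
        (C.map Complex.ofReal)) *ᵥ v = 0 → v = 0 := by
    intro v hv
    rw [Matrix.fromRows_mulVec] at hv
    have hv1 : (s • (1 : Matrix (Fin n) (Fin n) ℂ) - Tx.map Complex.ofReal) *ᵥ v = 0 := by
      funext i; exact congrFun hv (Sum.inl i)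
    have hv2 : C.map Complex.ofReal *ᵥ v = 0 := by
      funext i; exact congrFun hv (Sum.inr i)
    set z : Fin r → ℂ := S.map Complex.ofReal *ᵥ ((C * A).map Complex.ofReal *ᵥ v) with hz
    have hTyc : Ty.map Complex.ofReal = Bp.map Complex.ofReal * S.map Complex.ofReal := by
      rw [← aux_mapC_mul, hS]
    have hTyz : Ty.map Complex.ofReal *ᵥ ((C * A).map Complex.ofReal *ᵥ v) =
        Bp.map Complex.ofReal *ᵥ z := by
      rw [hTyc, hz]
      exact (Matrix.mulVec_mulVec _ _ _).symm
    have e1 : (s • (1 : Matrix (Fin n) (Fin n) ℂ) - Tx.map Complex.ofReal) *ᵥ v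
        = s • v - A.map Complex.ofReal *ᵥ v + Bp.map Complex.ofReal *ᵥ z := by
      rw [hTxEq, aux_mapC_sub, aux_mapC_mul]
      rw [Matrix.sub_mulVec, Matrix.sub_mulVec, Matrix.smul_mulVec,
        Matrix.one_mulVec, ← Matrix.mulVec_mulVec, hTyz]
      abel
    rw [e1] at hv1
    have hrel : s • v - A.map Complex.ofReal *ᵥ v = -(Bp.map Complex.ofReal *ᵥ z) :=
      eq_neg_of_add_eq_zero_left hv1
    have hker : Sum.elim (0 : Fin m → ℂ) (Sum.elim (-z) v) = 0 := by
      apply aux_mulVec_eq_zero hrankK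
      rw [hKb, Matrix.fromRows_mulVec, Matrix.fromRows_mulVec]
      have e1 : K1 *ᵥ Sum.elim (0 : Fin m → ℂ) (Sum.elim (-z) v) = 0 := by
        rw [hK1, Matrix.fromCols_mulVec_sumElim, Matrix.fromCols_mulVec_sumElim,
          Matrix.mulVec_zero, Matrix.neg_mulVec, Matrix.mulVec_neg, neg_neg,
          Matrix.sub_mulVec, Matrix.smul_mulVec, Matrix.one_mulVec, hrel]
        abel
      have e2 : K2 *ᵥ Sum.elim (0 : Fin m → ℂ) (Sum.elim (-z) v) = 0 := by
        rw [hK2, Matrix.fromCols_mulVec_sumElim]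
        simp
      have e3 : K3 *ᵥ Sum.elim (0 : Fin m → ℂ) (Sum.elim (-z) v) = 0 := by
        rw [hK3, Matrix.fromCols_mulVec_sumElim, Matrix.fromCols_mulVec_sumElim]
        simp [hv2]
      rw [e1, e2, e3]
      funext i
      rcases i with i | i | i <;> rfl
    funext i
    exact congrFun hker (Sum.inr (Sum.inr i))
  have hfin := aux_rank_of_inj hinj
  rw [hfin, Fintype.card_fin]
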